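/- Let U ⊆ ℝ^n be an open connected set. Then ℝ^n \ U is connected if and only if the boundary ∂U is connected. -/

import Mathlib

open Set

local instance : Fact ((0:ℝ) < 1) := ⟨one_pos⟩

/-- canonical representative in `[-1/2, 1/2)` -/
noncomputable def rho (u : AddCircle (1:ℝ)) : ℝ :=
  (AddCircle.equivIco 1 (-(1/2)) u : ℝ)

lemma rho_mem (u : AddCircle (1:ℝ)) : rho u ∈ Ico (-(1/2) : ℝ) (1/2) := by
  have h := (AddCircle.equivIco 1 (-(1/2)) u).2
  norm_num at h
  exact ⟨h.1, h.2⟩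

lemma coe_rho (u : AddCircle (1:ℝ)) : ((rho u : ℝ) : AddCircle (1:ℝ)) = u :=
  (AddCircle.equivIco 1 (-(1/2))).symm_apply_apply u

lemma norm_eq_abs_rho (u : AddCircle (1:ℝ)) : ‖u‖ = |rho u| := by
  conv_lhs => rw [← coe_rho u]
  rw [AddCircle.norm_eq]
  have h := rho_mem u
  have : round ((1:ℝ)⁻¹ * rho u) = 0 := by
    rw [inv_one, one_mul, round_eq_zero_iff]
    exact ⟨h.1, h.2⟩
  rw [this]
  norm_num

lemma eq_of_coe_eq {r s : ℝ} (h : (r : AddCircle (1:ℝ)) = s) (hrs : |r - s| < 1) : r = s := by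
  rw [QuotientAddGroup.eq_iff_sub_mem] at h
  rw [AddSubgroup.mem_zmultiples_iff] at h
  obtain ⟨k, hk⟩ := h
  rw [zsmul_eq_mul, mul_one] at hk
  have : (k : ℝ) = r - s := hk
  have hk0 : k = 0 := by
    have h1 : |(k:ℝ)| < 1 := by rw [this]; exact hrs
    have : (-1 : ℝ) < k ∧ (k:ℝ) < 1 := abs_lt.mp h1
    have h2 : (-1 : ℤ) < k := by exact_mod_cast this.1
    have h3 : k < 1 := by exact_mod_cast this.2
    omega
  rw [hk0] at this
  have : r - s = 0 := by simpa using this.symm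
  linarith [this]

lemma rho_coe {r : ℝ} (h : r ∈ Ico (-(1/2) : ℝ) (1/2)) : rho ((r : ℝ) : AddCircle (1:ℝ)) = r := by
  apply eq_of_coe_eq (coe_rho _)
  have h2 := rho_mem ((r : ℝ) : AddCircle (1:ℝ))
  rw [abs_sub_lt_iff]
  constructor <;> [linarith [h2.1, h2.2, h.1, h.2]; linarith [h2.1, h2.2, h.1, h.2]]

lemma rho_zero : rho (0 : AddCircle (1:ℝ)) = 0 := by
  have : ((0:ℝ) : AddCircle (1:ℝ)) = 0 := by norm_num
  rw [← this, rho_coe] ; norm_num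

lemma continuousAt_rho {u : AddCircle (1:ℝ)} (h : ‖u‖ < 1/2) : ContinuousAt rho u := by
  have hne : u ≠ (((-(1/2) : ℝ)) : AddCircle (1:ℝ)) := by
    intro he
    rw [he] at h
    rw [AddCircle.norm_eq] at h
    have : round ((1:ℝ)⁻¹ * (-(1/2))) = 0 := by
      rw [round_eq_zero_iff]; constructor <;> norm_num
    rw [this] at h
    norm_num at h
  exact continuous_subtype_val.continuousAt.comp (AddCircle.continuousAt_equivIco 1 _ hne)
section LiftMachinery

variable {E : Type*} [NormedAddCommGroup E] [NormedSpace ℝ E] [FiniteDimensional ℝ E]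

variable (f : E → AddCircle (1:ℝ))

/-- partial lift sums -/
noncomputable def liftSum (N : ℕ) (x : E) : ℝ :=
  ∑ j ∈ Finset.range N,
    rho (f ((((j+1 : ℕ) : ℝ) / (N : ℝ)) • x) - f (((j : ℝ) / (N : ℝ)) • x))

/-- the set of `x` on which subdivision into `N` pieces is fine enough -/
def fineSet (N : ℕ) : Set E :=
  {x | ∀ s ∈ Set.Icc (0:ℝ) 1, ∀ t ∈ Set.Icc (0:ℝ) 1, |s - t| ≤ 1 / (N:ℝ) →
      ‖f (s • x) - f (t • x)‖ < 1/8}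

lemma coe_liftSum (N : ℕ) (x : E) :
    ((liftSum f N x : ℝ) : AddCircle (1:ℝ))
      = f ((((N:ℕ) : ℝ) / (N : ℝ)) • x) - f ((((0:ℕ) : ℝ) / (N : ℝ)) • x) := by
  have h1 : ((liftSum f N x : ℝ) : AddCircle (1:ℝ))
      = ∑ j ∈ Finset.range N,
        (f ((((j+1 : ℕ) : ℝ) / (N : ℝ)) • x) - f (((j : ℝ) / (N : ℝ)) • x)) := by
    rw [liftSum]
    have key : ∀ (M : ℕ) (g : ℕ → ℝ), ((∑ j ∈ Finset.range M, g j : ℝ) : AddCircle (1:ℝ))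
        = ∑ j ∈ Finset.range M, ((g j : ℝ) : AddCircle (1:ℝ)) := by
      intro M g
      induction M with
      | zero => simp
      | succ m ih => rw [Finset.sum_range_succ, Finset.sum_range_succ, AddCircle.coe_add, ih]
    rw [key]
    exact Finset.sum_congr rfl fun j _ => coe_rho _
  rw [h1]
  exact Finset.sum_range_sub (fun j : ℕ => f (((j : ℝ) / (N : ℝ)) • x)) N

lemma fine_step {N : ℕ} {x : E} (hx : x ∈ fineSet f N) (hN : 0 < N) {j : ℕ} (hj : j < N) :
    ‖f ((((j+1 : ℕ) : ℝ) / (N : ℝ)) • x) - f (((j : ℝ) / (N : ℝ)) • x)‖ < 1/8 := by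
  have hN' : (0:ℝ) < N := by exact_mod_cast hN
  have hj' : (j:ℝ) + 1 ≤ N := by exact_mod_cast hj
  apply hx
  · constructor
    · positivity
    · rw [div_le_one hN']; push_cast; linarith
  · constructor
    · positivity
    · rw [div_le_one hN']; linarith
  · push_cast
    rw [div_sub_div_same, add_sub_cancel_left, abs_of_nonneg (by positivity)]

/-- key refinement estimate inside one block -/
lemma block (N k : ℕ) (hN : 0 < N) (hk : 0 < k) (x : E) (hx : x ∈ fineSet f N)
    (j : ℕ) (hj : j < N) : ∀ m, m ≤ k →
    (∑ i ∈ Finset.range m,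
      rho (f ((((j*k+i+1 : ℕ) : ℝ) / ((N*k : ℕ) : ℝ)) • x)
         - f ((((j*k+i : ℕ) : ℝ) / ((N*k : ℕ) : ℝ)) • x)))
    = rho (f ((((j*k+m : ℕ) : ℝ) / ((N*k : ℕ) : ℝ)) • x) - f (((j : ℝ) / (N : ℝ)) • x)) := by
  have hN' : (0:ℝ) < N := by exact_mod_cast hN
  have hk' : (0:ℝ) < k := by exact_mod_cast hk
  have hNk' : (0:ℝ) < (N:ℝ) * k := by positivity
  have hj' : (j:ℝ) + 1 ≤ N := by exact_mod_cast hj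
  -- membership of intermediate points
  have hmem : ∀ i : ℕ, (i:ℝ) ≤ k → (((j*k+i : ℕ) : ℝ) / ((N*k : ℕ) : ℝ)) ∈ Set.Icc (0:ℝ) 1 := by
    intro i hi
    push_cast
    constructor
    · positivity
    · rw [div_le_one (by push_cast; positivity)]
      nlinarith
  have hdist : ∀ i : ℕ, (i:ℝ) ≤ k →
      |((j*k+i : ℕ) : ℝ) / ((N*k : ℕ) : ℝ) - (j : ℝ) / (N : ℝ)| ≤ 1 / (N:ℝ) := by
    intro i hi
    push_cast
    have heq : ((j:ℝ)*k+i) / ((N:ℝ)*k) - (j : ℝ) / (N : ℝ) = (i:ℝ) / ((N:ℝ)*k) := by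
      field_simp; ring
    rw [heq, abs_of_nonneg (by positivity), div_le_div_iff₀ (by positivity) hN']
    nlinarith
  have hjN : ((j:ℝ) / (N:ℝ)) ∈ Set.Icc (0:ℝ) 1 := by
    constructor
    · positivity
    · rw [div_le_one hN']; linarith
  have hxd : ∀ i : ℕ, (i:ℝ) ≤ k →
      ‖f ((((j*k+i : ℕ) : ℝ) / ((N*k : ℕ) : ℝ)) • x) - f (((j : ℝ) / (N : ℝ)) • x)‖ < 1/8 :=
    fun i hi => hx _ (hmem i hi) _ hjN (hdist i hi)
  intro m
  induction m with
  | zero =>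
    intro _
    have heq : ((j*k+0 : ℕ) : ℝ) / ((N*k : ℕ) : ℝ) = (j : ℝ) / (N : ℝ) := by
      push_cast
      rw [div_eq_div_iff (by exact (mul_pos hN' hk').ne') hN'.ne']
      ring
    rw [Finset.sum_range_zero, heq, sub_self, rho_zero]
  | succ m ih =>
    intro hm
    have hm' : m ≤ k := Nat.le_of_succ_le hm
    have hmk : (m:ℝ) ≤ k := by exact_mod_cast hm'
    have hmk1 : ((m:ℝ)+1) ≤ k := by exact_mod_cast hm
    rw [Finset.sum_range_succ, ih hm']
    -- abbreviations
    set A := f ((((j*k+m : ℕ) : ℝ) / ((N*k : ℕ) : ℝ)) • x) - f (((j : ℝ) / (N : ℝ)) • x) with hA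
    set D := f ((((j*k+m+1 : ℕ) : ℝ) / ((N*k : ℕ) : ℝ)) • x)
           - f ((((j*k+m : ℕ) : ℝ) / ((N*k : ℕ) : ℝ)) • x) with hD
    set B := f ((((j*k+(m+1) : ℕ) : ℝ) / ((N*k : ℕ) : ℝ)) • x) - f (((j : ℝ) / (N : ℝ)) • x) with hB
    have hAn : ‖A‖ < 1/8 := hxd m hmk
    have hBn : ‖B‖ < 1/8 := hxd (m+1) (by push_cast; linarith)
    have hDn : ‖D‖ < 1/8 := by
      apply hx
      · exact hmem (m+1) (by push_cast; linarith)
      · exact hmem m hmk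
      · push_cast
        have heq : ((j:ℝ)*k+m+1) / ((N:ℝ)*k) - ((j:ℝ)*k+m) / ((N:ℝ)*k) = 1 / ((N:ℝ)*k) := by
          rw [div_sub_div_same]
          ring_nf
        rw [heq, abs_of_nonneg (by positivity),
          div_le_div_iff₀ (by exact mul_pos hN' hk') hN']
        nlinarith
    have hcoe : ((rho A + rho D : ℝ) : AddCircle (1:ℝ)) = ((rho B : ℝ) : AddCircle (1:ℝ)) := by
      rw [AddCircle.coe_add, coe_rho, coe_rho, coe_rho, hA, hD, hB]
      push_cast
      abel
    have habs : |(rho A + rho D) - rho B| < 1 := by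
      have h1 : |rho A| < 1/8 := by rw [← norm_eq_abs_rho]; exact hAn
      have h2 : |rho D| < 1/8 := by rw [← norm_eq_abs_rho]; exact hDn
      have h3 : |rho B| < 1/8 := by rw [← norm_eq_abs_rho]; exact hBn
      have := abs_add_le (rho A) (rho D)
      have := abs_sub (rho A + rho D) (rho B)
      calc |(rho A + rho D) - rho B| ≤ |rho A + rho D| + |rho B| := abs_sub _ _
        _ ≤ |rho A| + |rho D| + |rho B| := by linarith [abs_add_le (rho A) (rho D)]
        _ < 1 := by linarith
    exact eq_of_coe_eq hcoe habs

lemma sum_range_mul_group (a : ℕ → ℝ) (N k : ℕ) :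
    ∑ j ∈ Finset.range (N*k), a j = ∑ j ∈ Finset.range N, ∑ i ∈ Finset.range k, a (j*k+i) := by
  induction N with
  | zero => simp
  | succ n ih =>
    rw [Nat.succ_mul, Finset.sum_range_add, ih, Finset.sum_range_succ]

lemma liftSum_mul (N k : ℕ) (hN : 0 < N) (hk : 0 < k) (x : E) (hx : x ∈ fineSet f N) :
    liftSum f (N*k) x = liftSum f N x := by
  unfold liftSum
  rw [sum_range_mul_group]
  refine Finset.sum_congr rfl fun j hj => ?_
  have hj' : j < N := Finset.mem_range.mp hj
  have hb := block f N k hN hk x hx j hj' k le_rfl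
  have hN' : (0:ℝ) < N := by exact_mod_cast hN
  have hk' : (0:ℝ) < k := by exact_mod_cast hk
  have heq : ((j*k+k : ℕ) : ℝ) / ((N*k : ℕ) : ℝ) = ((j+1 : ℕ) : ℝ) / (N : ℝ) := by
    push_cast
    rw [div_eq_div_iff (by exact (mul_pos hN' hk').ne') hN'.ne']
    ring
  rw [hb, heq]
lemma liftSum_welldef (N M : ℕ) (hN : 0 < N) (hM : 0 < M) (x : E)
    (hxN : x ∈ fineSet f N) (hxM : x ∈ fineSet f M) : liftSum f N x = liftSum f M x := by
  rw [← liftSum_mul f N M hN hM x hxN, ← liftSum_mul f M N hM hN x hxM, Nat.mul_comm]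

lemma exists_fine (hf : Continuous f) (x₀ : E) :
    ∃ N : ℕ, 0 < N ∧ Metric.ball x₀ 1 ⊆ fineSet f N := by
  have hK : IsCompact ((Set.Icc (0:ℝ) 1) ×ˢ Metric.closedBall x₀ 1) :=
    isCompact_Icc.prod (isCompact_closedBall x₀ 1)
  have hφ : Continuous (fun q : ℝ × E => f (q.1 • q.2)) :=
    hf.comp (continuous_fst.smul continuous_snd)
  have huc := hK.uniformContinuousOn_of_continuous hφ.continuousOn
  rw [Metric.uniformContinuousOn_iff] at huc
  obtain ⟨δ, hδ, hδ'⟩ := huc (1/8) (by norm_num)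
  obtain ⟨N, hNδ⟩ := exists_nat_gt (1/δ)
  have hN : 0 < N := by
    have : (0:ℝ) < N := lt_trans (by positivity) hNδ
    exact_mod_cast this
  have hNδ' : 1 / (N:ℝ) < δ := by
    rw [div_lt_iff₀ (by exact_mod_cast hN)]
    rw [div_lt_iff₀ hδ] at hNδ
    linarith
  refine ⟨N, hN, fun y hy s hs t ht hst => ?_⟩
  have hy' : y ∈ Metric.closedBall x₀ 1 := Metric.ball_subset_closedBall hy
  have := hδ' (s, y) (Set.mk_mem_prod hs hy') (t, y) (Set.mk_mem_prod ht hy') ?_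
  · rwa [dist_eq_norm] at this
  · rw [Prod.dist_eq, dist_self]
    have h1 : dist s t = |s - t| := Real.dist_eq s t
    have : dist s t < δ := lt_of_le_of_lt (h1 ▸ hst) hNδ'
    exact max_lt this hδ

theorem exists_circle_lift (hf : Continuous f) :
    ∃ g : E → ℝ, Continuous g ∧ ∀ x, ((g x : ℝ) : AddCircle (1:ℝ)) = f x := by
  classical
  have hex : ∀ x : E, ∃ N, 0 < N ∧ x ∈ fineSet f N := by
    intro x
    obtain ⟨N, hN, hsub⟩ := exists_fine f hf x
    exact ⟨N, hN, hsub (Metric.mem_ball_self one_pos)⟩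
  set g₀ : E → ℝ := fun x => liftSum f (Nat.find (hex x)) x with hg₀
  have hg₀cont : Continuous g₀ := by
    rw [continuous_iff_continuousAt]
    intro x₀
    obtain ⟨N, hN, hsub⟩ := exists_fine f hf x₀
    have hx₀ : x₀ ∈ fineSet f N := hsub (Metric.mem_ball_self one_pos)
    have key : ∀ y ∈ Metric.ball x₀ 1, g₀ y = liftSum f N y := fun y hy =>
      liftSum_welldef f _ N (Nat.find_spec (hex y)).1 hN y (Nat.find_spec (hex y)).2 (hsub hy)
    have hLS : ContinuousAt (liftSum f N) x₀ := by
      unfold liftSum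
      refine tendsto_finset_sum _ fun j hj => ?_
      have hj' : j < N := Finset.mem_range.mp hj
      have hnorm : ‖f ((((j+1 : ℕ) : ℝ) / (N : ℝ)) • x₀) - f (((j : ℝ) / (N : ℝ)) • x₀)‖ < 1/2 :=
        lt_trans (fine_step f hx₀ hN hj') (by norm_num)
      have hc : ContinuousAt
          (fun y : E => f ((((j+1:ℕ):ℝ)/(N:ℝ)) • y) - f (((j:ℝ)/(N:ℝ)) • y)) x₀ :=
        ((hf.comp (continuous_const_smul _)).sub (hf.comp (continuous_const_smul _))).continuousAt
      show ContinuousAt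
        (fun y : E => rho (f ((((j+1:ℕ):ℝ)/(N:ℝ)) • y) - f (((j:ℝ)/(N:ℝ)) • y))) x₀
      exact ContinuousAt.comp (g := rho)
        (f := fun y : E => f ((((j+1:ℕ):ℝ)/(N:ℝ)) • y) - f (((j:ℝ)/(N:ℝ)) • y))
        (continuousAt_rho hnorm) hc
    apply hLS.congr
    exact Filter.eventuallyEq_of_mem (Metric.ball_mem_nhds x₀ one_pos)
      (fun y hy => (key y hy).symm)
  refine ⟨fun x => g₀ x + rho (f 0), hg₀cont.add continuous_const, fun x => ?_⟩
  have hNpos := (Nat.find_spec (hex x)).1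
  have hN' : ((Nat.find (hex x) : ℕ) : ℝ) ≠ 0 := by
    exact_mod_cast Nat.pos_iff_ne_zero.mp hNpos
  have h1 := coe_liftSum f (Nat.find (hex x)) x
  rw [div_self hN', one_smul] at h1
  rw [Nat.cast_zero, zero_div, zero_smul] at h1
  show ((liftSum f (Nat.find (hex x)) x + rho (f 0) : ℝ) : AddCircle (1:ℝ)) = f x
  rw [AddCircle.coe_add, coe_rho, h1]
  abel
end LiftMachinery

section MainProof

open Set

/-- a continuous real function with integer values on a preconnected set is constant there -/
lemma intval_const {X : Type*} [TopologicalSpace X] {s : Set X} (hs : IsPreconnected s)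
    {ψ : X → ℝ} (hψ : ContinuousOn ψ s) (hint : ∀ x ∈ s, ∃ k : ℤ, ψ x = k)
    {x y : X} (hx : x ∈ s) (hy : y ∈ s) : ψ x = ψ y := by
  have core : ∀ a ∈ s, ∀ b ∈ s, ψ a < ψ b → False := by
    intro a ha b hb hab
    obtain ⟨k, hk⟩ := hint a ha
    obtain ⟨l, hl⟩ := hint b hb
    have ht : IsPreconnected (ψ '' s) := hs.image ψ hψ
    have hoc : OrdConnected (ψ '' s) := ht.ordConnected
    have hkl : (k:ℝ) < l := by rw [← hk, ← hl]; exact hab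
    have hkl' : (k:ℤ) < l := by exact_mod_cast hkl
    have hc : (k:ℝ) + 1/2 ∈ Icc (ψ a) (ψ b) := by
      constructor
      · rw [hk]; linarith
      · rw [hl]
        have : (k:ℝ) + 1 ≤ l := by exact_mod_cast hkl'
        linarith
    have hcim : (k:ℝ) + 1/2 ∈ ψ '' s :=
      hoc.out (Set.mem_image_of_mem ψ ha) (Set.mem_image_of_mem ψ hb) hc
    obtain ⟨z, hz, hzc⟩ := hcim
    obtain ⟨m, hm⟩ := hint z hz
    have hmc : (m:ℝ) = (k:ℝ) + 1/2 := by rw [← hm, hzc]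
    have h1 : (k:ℤ) < m := by
      have : (k:ℝ) < m := by rw [hmc]; linarith
      exact_mod_cast this
    have h2 : (m:ℤ) < k + 1 := by
      have : (m:ℝ) < (k:ℝ) + 1 := by rw [hmc]; linarith
      exact_mod_cast this
    omega
  rcases lt_trichotomy (ψ x) (ψ y) with h | h | h
  · exact absurd (core x hx y hy h) (by simp)
  · exact h
  · exact absurd (core y hy x hx h) (by simp)

/-- helper for the easy direction -/
lemma compl_helper {E : Type*} [NormedAddCommGroup E] [NormedSpace ℝ E]
    {U u v : Set E} (hU : IsOpen U) (hu : IsOpen u) (hv : IsOpen v)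
    (hcov : Uᶜ ⊆ u ∪ v) (h1 : (Uᶜ ∩ u).Nonempty) (h2 : (Uᶜ ∩ v).Nonempty)
    (hdisj : Uᶜ ∩ (u ∩ v) = ∅) (hfv : frontier U ∩ v = ∅) : False := by
  have hconn : IsPreconnected (Set.univ : Set E) :=
    (convex_univ : Convex ℝ (Set.univ : Set E)).isPreconnected
  set X := closure U ∪ (Uᶜ ∩ vᶜ) with hXdef
  set Y := Uᶜ ∩ uᶜ with hYdef
  have hXc : IsClosed X := isClosed_closure.union (hU.isClosed_compl.inter hv.isClosed_compl)
  have hYc : IsClosed Y := hU.isClosed_compl.inter hu.isClosed_compl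
  have hfUsub : closure U ∩ Uᶜ ⊆ frontier U := by
    intro x hx
    refine ⟨hx.1, fun hxi => hx.2 ?_⟩
    rwa [hU.interior_eq] at hxi
  have hXY : X ∩ Y = ∅ := by
    rw [Set.eq_empty_iff_forall_notMem]
    rintro x ⟨hxX, hxY⟩
    have hxv : x ∈ v := by
      rcases hcov hxY.1 with h | h
      · exact absurd h hxY.2
      · exact h
    rcases hxX with h | h
    · have : x ∈ frontier U := hfUsub ⟨h, hxY.1⟩
      exact (Set.eq_empty_iff_forall_notMem.mp hfv x) ⟨this, hxv⟩
    · exact h.2 hxv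
  have hcover : X ∪ Y = Set.univ := by
    rw [Set.eq_univ_iff_forall]
    intro x
    by_cases hxU : x ∈ U
    · exact Or.inl (Or.inl (subset_closure hxU))
    · by_cases hxv : x ∈ v
      · right
        refine ⟨hxU, fun hxu => ?_⟩
        exact (Set.eq_empty_iff_forall_notMem.mp hdisj x) ⟨hxU, hxu, hxv⟩
      · exact Or.inl (Or.inr ⟨hxU, hxv⟩)
  have hXne : X.Nonempty := by
    obtain ⟨x, hxU, hxu⟩ := h1
    refine ⟨x, Or.inr ⟨hxU, fun hxv => ?_⟩⟩
    exact (Set.eq_empty_iff_forall_notMem.mp hdisj x) ⟨hxU, hxu, hxv⟩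
  have hYne : Y.Nonempty := by
    obtain ⟨x, hxU, hxv⟩ := h2
    refine ⟨x, hxU, fun hxu => ?_⟩
    exact (Set.eq_empty_iff_forall_notMem.mp hdisj x) ⟨hxU, hxu, hxv⟩
  have hsub : Set.univ ⊆ Yᶜ ∪ Xᶜ := by
    intro x _
    by_cases hxX : x ∈ X
    · exact Or.inl (fun hxY => (Set.eq_empty_iff_forall_notMem.mp hXY x) ⟨hxX, hxY⟩)
    · exact Or.inr hxX
  obtain ⟨z, _, hz1, hz2⟩ := hconn Yᶜ Xᶜ hYc.isOpen_compl hXc.isOpen_compl hsub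
    ⟨hXne.choose, Set.mem_univ _, fun hY => (Set.eq_empty_iff_forall_notMem.mp hXY _)
      ⟨hXne.choose_spec, hY⟩⟩
    ⟨hYne.choose, Set.mem_univ _, fun hX => (Set.eq_empty_iff_forall_notMem.mp hXY _)
      ⟨hX, hYne.choose_spec⟩⟩
  have : z ∈ X ∪ Y := hcover ▸ Set.mem_univ z
  rcases this with h | h
  · exact hz2 h
  · exact hz1 h

end MainProof

/-- Czarnecki: for an open connected `U ⊆ ℝⁿ`, the complement `ℝⁿ \ U` is connected
if and only if the boundary `∂U` is connected. -/
theorem compl_connected_iff_frontier_connected (n : ℕ)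
    (U : Set (EuclideanSpace ℝ (Fin n))) (hU : IsOpen U) (hUc : IsConnected U) :
    IsPreconnected Uᶜ ↔ IsPreconnected (frontier U) := by
  classical
  have hFsub : frontier U ⊆ Uᶜ := by
    intro x hx hxU
    exact hx.2 (by rwa [hU.interior_eq])
  constructor
  · -- hard direction : complement connected → frontier connected
    intro hC
    by_contra hF
    rw [IsPreconnected] at hF
    push_neg at hF
    obtain ⟨u, v, hu, hv, hcov, hne1, hne2, hne3⟩ := hF
    set A := frontier U ∩ vᶜ with hAdef
    set B := frontier U ∩ uᶜ with hBdef
    have hAc : IsClosed A := isClosed_frontier.inter hv.isClosed_compl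
    have hBc : IsClosed B := isClosed_frontier.inter hu.isClosed_compl
    have hABdisj : Disjoint A B := by
      rw [Set.disjoint_iff_inter_eq_empty, Set.eq_empty_iff_forall_notMem]
      rintro x ⟨⟨hxF, hxv⟩, -, hxu⟩
      rcases hcov hxF with h | h
      · exact hxu h
      · exact hxv h
    have hAne : A.Nonempty := by
      obtain ⟨x, hxF, hxu⟩ := hne1
      exact ⟨x, hxF, fun hxv =>
        (Set.eq_empty_iff_forall_notMem.mp hne3 x) ⟨hxF, hxu, hxv⟩⟩
    have hBne : B.Nonempty := by
      obtain ⟨x, hxF, hxv⟩ := hne2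
      exact ⟨x, hxF, fun hxu =>
        (Set.eq_empty_iff_forall_notMem.mp hne3 x) ⟨hxF, hxu, hxv⟩⟩
    have hABcover : frontier U ⊆ A ∪ B := by
      intro x hxF
      by_cases hxv : x ∈ v
      · exact Or.inr ⟨hxF, fun hxu =>
          (Set.eq_empty_iff_forall_notMem.mp hne3 x) ⟨hxF, hxu, hxv⟩⟩
      · exact Or.inl ⟨hxF, hxv⟩
    obtain ⟨h, hh0, hh1, hh01⟩ := exists_continuous_zero_one_of_isClosed hAc hBc hABdisj
    -- the circle-valued map
    set φ : EuclideanSpace ℝ (Fin n) → AddCircle (1:ℝ) := fun x =>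
      if x ∈ closure U then ((h x / 2 : ℝ) : AddCircle (1:ℝ))
      else ((-(h x) / 2 : ℝ) : AddCircle (1:ℝ)) with hφdef
    have hhalf : (((1:ℝ) / 2 : ℝ) : AddCircle (1:ℝ)) = ((-(1:ℝ) / 2 : ℝ) : AddCircle (1:ℝ)) := by
      rw [QuotientAddGroup.eq_iff_sub_mem]
      rw [AddSubgroup.mem_zmultiples_iff]
      exact ⟨1, by norm_num⟩
    have hφcont : Continuous φ := by
      apply Continuous.if
      · intro a ha
        have haF : a ∈ frontier U := frontier_closure_subset ha
        rcases hABcover haF with hA | hB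
        · have h0 : h a = 0 := hh0 hA
          rw [h0]; norm_num
        · have h1 : h a = 1 := hh1 hB
          rw [h1]; exact hhalf
      · exact (AddCircle.continuous_mk' 1).comp (h.continuous.div_const 2)
      · exact (AddCircle.continuous_mk' 1).comp ((h.continuous.neg).div_const 2)
    obtain ⟨g, hgcont, hgφ⟩ := exists_circle_lift φ hφcont
    -- g - h/2 is integer valued on the closure of U
    have hint1 : ∀ x ∈ closure U, ∃ k : ℤ, g x - h x / 2 = k := by
      intro x hx
      have : ((g x - h x / 2 : ℝ) : AddCircle (1:ℝ)) = 0 := by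
        rw [AddCircle.coe_sub, hgφ, hφdef]
        simp only [if_pos hx]
        exact sub_self _
      rw [AddCircle.coe_eq_zero_iff] at this
      obtain ⟨k, hk⟩ := this
      rw [zsmul_eq_mul, mul_one] at hk
      exact ⟨k, hk.symm⟩
    -- g + h/2 is integer valued on the complement of U
    have hint2 : ∀ x ∈ Uᶜ, ∃ k : ℤ, g x + h x / 2 = k := by
      intro x hx
      have key : ((g x + h x / 2 : ℝ) : AddCircle (1:ℝ)) = 0 := by
        rw [AddCircle.coe_add, hgφ, hφdef]
        by_cases hxc : x ∈ closure U
        · simp only [if_pos hxc]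
          have hxF : x ∈ frontier U := ⟨hxc, by rwa [hU.interior_eq]⟩
          rcases hABcover hxF with hA | hB
          · have h0 : h x = 0 := hh0 hA
            rw [h0]; norm_num
          · have h1 : h x = 1 := hh1 hB
            rw [h1, ← AddCircle.coe_add, show (1:ℝ)/2 + 1/2 = 1 by norm_num]
            exact AddCircle.coe_period 1
        · simp only [if_neg hxc]
          rw [← AddCircle.coe_add, show -h x/2 + h x/2 = (0:ℝ) by ring]
          exact (by simp : (((0:ℝ)) : AddCircle (1:ℝ)) = 0)
      rw [AddCircle.coe_eq_zero_iff] at key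
      obtain ⟨k, hk⟩ := key
      rw [zsmul_eq_mul, mul_one] at hk
      exact ⟨k, hk.symm⟩
    obtain ⟨a, haA⟩ := hAne
    obtain ⟨b, hbB⟩ := hBne
    have haF : a ∈ frontier U := haA.1
    have hbF : b ∈ frontier U := hbB.1
    have hacl : a ∈ closure U := haF.1
    have hbcl : b ∈ closure U := hbF.1
    have hacpl : a ∈ Uᶜ := hFsub haF
    have hbcpl : b ∈ Uᶜ := hFsub hbF
    have hccl : IsPreconnected (closure U) := hUc.isPreconnected.closure
    have hψ1 : Continuous (fun x : EuclideanSpace ℝ (Fin n) => g x - h x / 2) :=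
      hgcont.sub (h.continuous.div_const 2)
    have hψ2 : Continuous (fun x : EuclideanSpace ℝ (Fin n) => g x + h x / 2) :=
      hgcont.add (h.continuous.div_const 2)
    have e1 : g a - h a / 2 = g b - h b / 2 :=
      intval_const hccl hψ1.continuousOn hint1 hacl hbcl
    have e2 : g a + h a / 2 = g b + h b / 2 :=
      intval_const hC hψ2.continuousOn hint2 hacpl hbcpl
    have ha0 : h a = 0 := hh0 haA
    have hb1 : h b = 1 := hh1 hbB
    rw [ha0, hb1] at e1 e2
    linarith
  · -- easy direction : frontier connected → complement connected
    intro hF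
    intro u v hu hv hcov hne1 hne2
    by_contra hne3
    rw [Set.not_nonempty_iff_eq_empty] at hne3
    have hFcov : frontier U ⊆ u ∪ v := fun x hx => hcov (hFsub hx)
    have hdisj2 : ¬((frontier U ∩ u).Nonempty ∧ (frontier U ∩ v).Nonempty) := by
      rintro ⟨n1, n2⟩
      obtain ⟨z, hzF, hzu, hzv⟩ := hF u v hu hv hFcov n1 n2
      exact (Set.eq_empty_iff_forall_notMem.mp hne3 z) ⟨hFsub hzF, hzu, hzv⟩
    rcases not_and_or.mp hdisj2 with hcase | hcase
    · rw [Set.not_nonempty_iff_eq_empty] at hcase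
      exact compl_helper hU hv hu (by rwa [Set.union_comm]) hne2 hne1
        (by rwa [Set.inter_comm v u]) hcase
    · rw [Set.not_nonempty_iff_eq_empty] at hcase
      exact compl_helper hU hu hv hcov hne1 hne2 hne3 hcase
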